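/- arXiv:2101.02838 — 2 statements merged into one kernel-verified Lean document; each statement's English description precedes it below -/
import Mathlib

section
/- For a positive integer m, a finite connected simple graph G is a (1,m)-completeness-resolvable graph if and only if G is a path graph (necessarily with m+1 vertices). -/
open SimpleGraph

/-- `w` enumerates a `(k, m)`-completeness-resolving set of `G`:
`w` is injective, its range `W` is a proper subset of the vertex set, and the map
`u ↦ (dist (w 1) u, …, dist (w k) u)` is a bijection from `V ∖ W` onto `[m]^k`. -/
def IsCRS {V : Type*} (G : SimpleGraph V) {k : ℕ} (w : Fin k → V) (m : ℕ) : Prop :=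
  Function.Injective w ∧ Set.range w ≠ Set.univ ∧
    Function.Injective
      (fun u : {u : V // u ∉ Set.range w} => fun i : Fin k => G.dist (w i) u.1) ∧
    Set.range (fun u : {u : V // u ∉ Set.range w} => fun i : Fin k => G.dist (w i) u.1) =
      {x : Fin k → ℕ | ∀ i, 1 ≤ x i ∧ x i ≤ m}

/-- `G` is a `(k, m)`-completeness-resolvable graph. -/
def IsCRG {V : Type*} (G : SimpleGraph V) (k m : ℕ) : Prop :=
  ∃ w : Fin k → V, IsCRS G w m

/-- `G` is completeness-resolvable. -/
def CompletenessResolvable {V : Type*} (G : SimpleGraph V) : Prop :=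
  ∃ (k m : ℕ) (w : Fin k → V), IsCRS G w m

/-! ### The family `B_k`.
Tuples in `[2]^k` are modelled as functions `Fin k → Fin 2`, the `Fin 2`-value `j`
corresponding to the entry `j + 1 ∈ {1, 2}`. -/

/-- The graph `H1 ∘ H2` on `[k] ⊔ [2]^k`. -/
def comp2 {k : ℕ} (H1 : SimpleGraph (Fin k)) (H2 : SimpleGraph (Fin k → Fin 2)) :
    SimpleGraph (Fin k ⊕ (Fin k → Fin 2)) where
  Adj a b :=
    match a, b with
    | Sum.inl i, Sum.inl j => H1.Adj i j
    | Sum.inr x, Sum.inr y => H2.Adj x y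
    | Sum.inl i, Sum.inr x => x i = 0
    | Sum.inr x, Sum.inl i => x i = 0
  symm := by
    constructor
    rintro (i | x) (j | y) h
    · exact H1.adj_symm h
    · exact h
    · exact h
    · exact H2.adj_symm h
  loopless := by
    constructor
    rintro (i | x) h
    · exact H1.irrefl h
    · exact H2.irrefl h

/-- The defining condition of `B_k`: for each `i`, the edges of `H2` lying in the complete
bipartite graph `B_i^k` (i.e. joining a tuple with `i`-th entry `1` to one with `i`-th entry `2`)
cover every tuple all of whose entries on the closed neighbourhood of `i` in `H1` equal `2`. -/
def BCond {k : ℕ} (H1 : SimpleGraph (Fin k)) (H2 : SimpleGraph (Fin k → Fin 2)) : Prop :=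
  ∀ (i : Fin k) (x : Fin k → Fin 2),
    (∀ j : Fin k, (j = i ∨ H1.Adj i j) → x j = 1) →
    ∃ y : Fin k → Fin 2, H2.Adj x y ∧ y i ≠ x i

/-- The family `B_k`, as a set of graphs on `[k] ⊔ [2]^k`. -/
def Bset (k : ℕ) : Set (SimpleGraph (Fin k ⊕ (Fin k → Fin 2))) :=
  {G | ∃ H1 H2, BCond H1 H2 ∧ G = comp2 H1 H2}

/-- `H2` is `H1`-minimal. -/
def H1Minimal {k : ℕ} (H1 : SimpleGraph (Fin k)) (H2 : SimpleGraph (Fin k → Fin 2)) : Prop :=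
  comp2 H1 H2 ∈ Bset k ∧
    ∀ H2' : SimpleGraph (Fin k → Fin 2), H2' < H2 → comp2 H1 H2' ∉ Bset k

/-- The graph `U_k` on `[2]^k`, with unique edge `{(1,…,1), (2,…,2)}`. -/
def Uk (k : ℕ) : SimpleGraph (Fin k → Fin 2) :=
  SimpleGraph.fromEdgeSet {s(fun _ => (0 : Fin 2), fun _ => (1 : Fin 2))}

/-- The graph `V_k` on `[2]^k`, whose edges join `(2,…,2)` to the tuples having exactly one
entry equal to `1`. -/
def Vk (k : ℕ) : SimpleGraph (Fin k → Fin 2) :=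
  SimpleGraph.fromEdgeSet
    {e | ∃ i : Fin k, e = s(Function.update (fun _ => (1 : Fin 2)) i 0, fun _ => (1 : Fin 2))}

/-- The graph `R_k` on `[2]^k`: the perfect matching pairing each tuple with its complement. -/
def Rk (k : ℕ) : SimpleGraph (Fin k → Fin 2) :=
  SimpleGraph.fromRel fun x y => ∀ i, x i ≠ y i

/-- The hypercube graph `Q_k` on `[2]^k`: tuples are adjacent when they differ in exactly one
coordinate. -/
def Qk (k : ℕ) : SimpleGraph (Fin k → Fin 2) :=
  SimpleGraph.fromRel fun x y => ∃ i, x i ≠ y i ∧ ∀ j, j ≠ i → x j = y j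

/-! ### The family `C_k`.
Tuples in `[3]^k` are modelled as functions `Fin k → Fin 3`, the `Fin 3`-value `j`
corresponding to the entry `j + 1 ∈ {1, 2, 3}`. -/

/-- Entries `a` and `b` (of `{1,2,3}`, coded in `Fin 3`) satisfy `|a - b| ≤ 1`. -/
def near3 (a b : Fin 3) : Prop := (a : ℕ) ≤ (b : ℕ) + 1 ∧ (b : ℕ) ≤ (a : ℕ) + 1

/-- `{x, y}` is an edge of the bipartite graph `C_i^k` (between `i`-th entry `1` and
`i`-th entry `2`, with all other entries differing by at most `1`). -/
def CAdj {k : ℕ} (i : Fin k) (x y : Fin k → Fin 3) : Prop :=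
  ((x i = 0 ∧ y i = 1) ∨ (x i = 1 ∧ y i = 0)) ∧ ∀ t, t ≠ i → near3 (x t) (y t)

/-- `{x, y}` is an edge of the bipartite graph `D_i^k` (between `i`-th entry `2` and
`i`-th entry `3`, with all other entries differing by at most `1`). -/
def DAdj {k : ℕ} (i : Fin k) (x y : Fin k → Fin 3) : Prop :=
  ((x i = 1 ∧ y i = 2) ∨ (x i = 2 ∧ y i = 1)) ∧ ∀ t, t ≠ i → near3 (x t) (y t)

/-- The graph `K̄_[k] ∘ H2` on `[k] ⊔ [3]^k`. -/
def comp3 {k : ℕ} (H2 : SimpleGraph (Fin k → Fin 3)) :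
    SimpleGraph (Fin k ⊕ (Fin k → Fin 3)) where
  Adj a b :=
    match a, b with
    | Sum.inl _, Sum.inl _ => False
    | Sum.inr x, Sum.inr y => H2.Adj x y
    | Sum.inl i, Sum.inr x => x i = 0
    | Sum.inr x, Sum.inl i => x i = 0
  symm := by
    constructor
    rintro (i | x) (j | y) h
    · exact h
    · exact h
    · exact h
    · exact H2.adj_symm h
  loopless := by
    constructor
    rintro (i | x) h
    · exact h
    · exact H2.irrefl h

/-- The defining condition of `C_k`: every edge of `H2` lies in some `C_i^k` or `D_i^k`;
for each `i` the edges of `H2` in `C_i^k` cover `[3]^k_i(2)`, and the edges of `H2` in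
`D_i^k` cover `S_i^k`. -/
def CCond {k : ℕ} (H2 : SimpleGraph (Fin k → Fin 3)) : Prop :=
  (∀ x y, H2.Adj x y → ∃ i, CAdj i x y ∨ DAdj i x y) ∧
  (∀ (i : Fin k) (x : Fin k → Fin 3), x i = 1 → ∃ y, H2.Adj x y ∧ CAdj i x y) ∧
  (∀ (i : Fin k) (x : Fin k → Fin 3), x i = 2 → (∀ t, x t ≠ 0) →
    ∃ y, H2.Adj x y ∧ DAdj i x y)

/-- The family `C_k`, as a set of graphs on `[k] ⊔ [3]^k`. -/
def Cset (k : ℕ) : Set (SimpleGraph (Fin k ⊕ (Fin k → Fin 3))) :=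
  {G | ∃ H2, CCond H2 ∧ G = comp3 H2}

/-- The graph `Γ_k` on `[3]^k`: distinct tuples are adjacent when all their entries differ
by at most `1`. -/
def GammaK (k : ℕ) : SimpleGraph (Fin k → Fin 3) :=
  SimpleGraph.fromRel fun x y => ∀ i, near3 (x i) (y i)

/-- `H2` is `k`-minimal. -/
def KMinimalC {k : ℕ} (H2 : SimpleGraph (Fin k → Fin 3)) : Prop :=
  comp3 H2 ∈ Cset k ∧
    ∀ H2' : SimpleGraph (Fin k → Fin 3), H2' < H2 → comp3 H2' ∉ Cset k


lemma pathGraph_walk_le {n : ℕ} {a b : Fin n} (p : (SimpleGraph.pathGraph n).Walk a b) :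
    (b : ℕ) ≤ (a : ℕ) + p.length := by
  induction p with
  | nil => simp
  | @cons u c w h p ih =>
    rw [SimpleGraph.pathGraph_adj] at h
    rw [SimpleGraph.Walk.length_cons]
    omega

lemma pathGraph_walk_exists (n : ℕ) : ∀ (j : ℕ) (h : j < n + 1),
    ∃ p : (SimpleGraph.pathGraph (n + 1)).Walk 0 ⟨j, h⟩, p.length = j := by
  intro j
  induction j with
  | zero =>
    intro h
    have h0 : (0 : Fin (n+1)) = ⟨0, h⟩ := rfl
    exact ⟨(SimpleGraph.Walk.nil).copy rfl h0, by simp⟩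
  | succ j ih =>
    intro h
    obtain ⟨p, hp⟩ := ih (by omega)
    have hadj : (SimpleGraph.pathGraph (n + 1)).Adj ⟨j, by omega⟩ ⟨j + 1, h⟩ :=
      SimpleGraph.pathGraph_adj.mpr (Or.inl rfl)
    exact ⟨p.concat hadj, by simp [SimpleGraph.Walk.length_concat, hp]⟩

lemma pathGraph_dist_zero {n : ℕ} (j : Fin (n + 1)) :
    (SimpleGraph.pathGraph (n + 1)).dist 0 j = (j : ℕ) := by
  apply le_antisymm
  · obtain ⟨p, hp⟩ := pathGraph_walk_exists n j j.isLt
    have he : (⟨(j : ℕ), j.isLt⟩ : Fin (n + 1)) = j := Fin.eta j j.isLt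
    rw [← he]
    exact le_of_le_of_eq (SimpleGraph.dist_le p) hp
  · obtain ⟨p, hp⟩ := (SimpleGraph.pathGraph_connected n).exists_walk_length_eq_dist 0 j
    have := pathGraph_walk_le p
    simp only [Fin.val_zero] at this
    omega

lemma iso_dist_le {V W : Type*} {G : SimpleGraph V} {G' : SimpleGraph W} (f : G ≃g G')
    (hconn : G.Connected) (u v : V) : G'.dist (f u) (f v) ≤ G.dist u v := by
  obtain ⟨p, hp⟩ := hconn.exists_walk_length_eq_dist u v
  calc G'.dist (f u) (f v) ≤ (p.map f.toHom).length := SimpleGraph.dist_le _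
    _ = p.length := p.length_map _
    _ = _ := hp

lemma iso_dist_eq {V W : Type*} {G : SimpleGraph V} {G' : SimpleGraph W} (f : G ≃g G')
    (h : G.Connected) (h' : G'.Connected) (u v : V) :
    G.dist u v = G'.dist (f u) (f v) := by
  refine le_antisymm ?_ (iso_dist_le f h u v)
  have := iso_dist_le f.symm h' (f u) (f v)
  simpa using this

/-- **Proposition.** For a positive integer `m`, a finite connected simple graph `G` is a
`(1,m)`-CRG iff `G` is a path graph (necessarily on `m + 1` vertices). -/
theorem isCRG_one_iff {V : Type*} [Fintype V] (m : ℕ) (hm : 1 ≤ m) (G : SimpleGraph V)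
    (hconn : G.Connected) (hcard : 2 ≤ Fintype.card V) :
    IsCRG G 1 m ↔ Nonempty (G ≃g SimpleGraph.pathGraph (m + 1)) := by
  constructor
  · rintro ⟨w, hwinj, hne, hfinj, hfr⟩
    set v := w 0 with hv
    have hrange : ∀ u : V, u ∈ Set.range w ↔ u = v := by
      intro u
      constructor
      · rintro ⟨i, rfl⟩; rw [Subsingleton.elim i 0]
      · rintro rfl; exact ⟨0, rfl⟩
    have hmem : ∀ (u : V) (hu : u ∉ Set.range w), 1 ≤ G.dist v u ∧ G.dist v u ≤ m := by
      intro u hu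
      have : (fun i : Fin 1 => G.dist (w i) u) ∈
          {x : Fin 1 → ℕ | ∀ i, 1 ≤ x i ∧ x i ≤ m} := by
        rw [← hfr]
        exact ⟨⟨u, hu⟩, rfl⟩
      exact this 0
    have hlt : ∀ u : V, G.dist v u < m + 1 := by
      intro u
      by_cases hu : u ∈ Set.range w
      · rw [(hrange u).mp hu, SimpleGraph.dist_self]; omega
      · have := (hmem u hu).2; omega
    have hdinj : ∀ (u u' : V), u ∉ Set.range w → u' ∉ Set.range w →
        G.dist v u = G.dist v u' → u = u' := by
      intro u u' hu hu' h
      have := hfinj (a₁ := ⟨u, hu⟩) (a₂ := ⟨u', hu'⟩) (by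
        funext i
        rw [Subsingleton.elim i 0]
        exact h)
      exact congrArg Subtype.val this
    set φ : V → Fin (m + 1) := fun u => ⟨G.dist v u, hlt u⟩ with hφ
    have hφinj : Function.Injective φ := by
      intro u u' h
      have hdd : G.dist v u = G.dist v u' := congrArg Fin.val h
      by_cases hu : u ∈ Set.range w
      · by_cases hu' : u' ∈ Set.range w
        · rw [(hrange u).mp hu, (hrange u').mp hu']
        · exfalso
          rw [(hrange u).mp hu, SimpleGraph.dist_self] at hdd
          have := (hmem u' hu').1; omega
      · by_cases hu' : u' ∈ Set.range w
        · exfalso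
          rw [(hrange u').mp hu', SimpleGraph.dist_self] at hdd
          have := (hmem u hu).1; omega
        · exact hdinj u u' hu hu' hdd
    have hφsurj : Function.Surjective φ := by
      intro d
      by_cases hd : (d : ℕ) = 0
      · exact ⟨v, by ext; simp [hφ, SimpleGraph.dist_self, hd.symm]⟩
      · have : (fun _ : Fin 1 => (d : ℕ)) ∈ Set.range
            (fun u : {u : V // u ∉ Set.range w} => fun i : Fin 1 => G.dist (w i) u.1) := by
          rw [hfr]
          intro i
          change 1 ≤ (d : ℕ) ∧ (d : ℕ) ≤ m
          have := d.isLt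
          omega
        obtain ⟨u, hu⟩ := this
        refine ⟨u.1, ?_⟩
        ext
        exact congrFun hu 0
    set e : V ≃ Fin (m + 1) := Equiv.ofBijective φ ⟨hφinj, hφsurj⟩ with he
    have hadj : ∀ u u' : V, (SimpleGraph.pathGraph (m + 1)).Adj (φ u) (φ u') ↔ G.Adj u u' := by
      intro u u'
      rw [SimpleGraph.pathGraph_adj]
      constructor
      · intro h
        -- wlog via the two symmetric cases
        have key : ∀ a b : V, G.dist v a + 1 = G.dist v b → G.Adj a b := by
          intro a b hab
          have hb0 : G.dist v b ≠ 0 := by omega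
          obtain ⟨p, hp⟩ := (hconn v b).exists_walk_length_eq_dist
          have hbv : b ≠ v := by
            intro hbv; rw [hbv, SimpleGraph.dist_self] at hb0; exact hb0 rfl
          obtain ⟨z, hz, q, hq⟩ := p.reverse.exists_eq_cons_of_ne hbv
          have hql : q.length = G.dist v a := by
            have : p.reverse.length = G.dist v b := by rw [SimpleGraph.Walk.length_reverse, hp]
            rw [hq, SimpleGraph.Walk.length_cons] at this
            omega
          have h1 : G.dist v z ≤ G.dist v a := by
            have := SimpleGraph.dist_le q.reverse
            rwa [SimpleGraph.Walk.length_reverse, hql] at this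
          have h2 : G.dist v b ≤ G.dist v z + 1 := by
            have htr := hconn.dist_triangle (u := v) (v := z) (w := b)
            have : G.dist z b ≤ 1 :=
              SimpleGraph.dist_le (SimpleGraph.Walk.cons hz.symm SimpleGraph.Walk.nil)
            omega
          have hza : G.dist v z = G.dist v a := by omega
          have : z = a := hφinj (by ext; exact hza)
          rw [← this]
          exact hz.symm
        rcases h with h | h
        · exact key u u' h
        · exact (key u' u h).symm
      · intro h
        have h1 : G.dist v u ≤ G.dist v u' + 1 := by
          have htr := hconn.dist_triangle (u := v) (v := u') (w := u)
          have : G.dist u' u ≤ 1 :=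
            SimpleGraph.dist_le (SimpleGraph.Walk.cons h.symm SimpleGraph.Walk.nil)
          omega
        have h2 : G.dist v u' ≤ G.dist v u + 1 := by
          have htr := hconn.dist_triangle (u := v) (v := u) (w := u')
          have : G.dist u u' ≤ 1 :=
            SimpleGraph.dist_le (SimpleGraph.Walk.cons h SimpleGraph.Walk.nil)
          omega
        have hne' : G.dist v u ≠ G.dist v u' := by
          intro heq
          exact G.ne_of_adj h (hφinj (by ext; exact heq))
        simp only [hφ]
        omega
    exact ⟨⟨e, fun {a b} => hadj a b⟩⟩
  · rintro ⟨f⟩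
    set v := f.symm 0 with hv
    have hpc : (SimpleGraph.pathGraph (m + 1)).Connected := SimpleGraph.pathGraph_connected m
    have hd : ∀ u : V, G.dist v u = (f u : ℕ) := by
      intro u
      rw [iso_dist_eq f hconn hpc, hv]
      simp only [RelIso.apply_symm_apply]
      exact pathGraph_dist_zero (f u)
    refine ⟨fun _ => v, fun a b _ => Subsingleton.elim a b, ?_, ?_, ?_⟩
    · intro hun
      have h1 : (1 : ℕ) < m + 1 := by omega
      have : f.symm ⟨1, h1⟩ ∈ Set.range (fun _ : Fin 1 => v) := hun ▸ Set.mem_univ _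
      obtain ⟨i, hi⟩ := this
      have : (⟨1, h1⟩ : Fin (m + 1)) = 0 := by
        have := congrArg f hi
        simp only [hv, RelIso.apply_symm_apply] at this
        exact this.symm
      simpa using congrArg Fin.val this
    · intro a b hab
      have h0 := congrFun hab 0
      simp only [hd] at h0
      exact Subtype.ext (f.toEquiv.injective (Fin.ext h0))
    · ext x
      constructor
      · rintro ⟨u, rfl⟩
        intro i
        have hu : u.1 ≠ v := by
          intro h
          exact u.2 ⟨0, h.symm⟩
        have hf0 : f u.1 ≠ 0 := by
          intro h
          apply hu
          apply f.toEquiv.injective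
          show f u.1 = f v
          rw [h, hv]
          simp
        have h1 : 1 ≤ (f u.1 : ℕ) := by
          rcases Nat.eq_zero_or_pos (f u.1 : ℕ) with h | h
          · exact absurd (Fin.ext h) hf0
          · omega
        have h2 : (f u.1 : ℕ) ≤ m := by have := (f u.1).isLt; omega
        simp only [hd]
        exact ⟨h1, h2⟩
      · intro hx
        have h0 := hx 0
        have hlt : x 0 < m + 1 := by omega
        set u : V := f.symm ⟨x 0, hlt⟩ with hu
        have hfu : f u = ⟨x 0, hlt⟩ := by simp [hu]
        have hunr : u ∉ Set.range (fun _ : Fin 1 => v) := by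
          rintro ⟨i, hi⟩
          rw [← hi] at hfu
          rw [hv] at hfu
          simp only [RelIso.apply_symm_apply] at hfu
          have := congrArg Fin.val hfu
          simp at this
          omega
        refine ⟨⟨u, hunr⟩, ?_⟩
        funext i
        rw [Subsingleton.elim i 0]
        simp only [hd, hfu]
end

section
/- Let k ≥ 2. If a graph H2 on [3]^k is k-minimal, then (3^k + 1)/2 ≤ |E(H2)| ≤ k·(3^{k−1} + 2^{k−1}). -/
open SimpleGraph

/-! ### Auxiliary development for the proof -/

section AuxKMin

open Finset

private lemma fin3_cases : ∀ a : Fin 3, a = 0 ∨ a = 1 ∨ a = 2 := by decide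

private lemma fin2_cases : ∀ a : Fin 2, a = 0 ∨ a = 1 := by decide

/-- The constant tuple. -/
def allc (k : ℕ) (c : Fin 3) : Fin k → Fin 3 := fun _ => c

/-- Coordinatewise predecessor. -/
def predf {k : ℕ} (x : Fin k → Fin 3) : Fin k → Fin 3 := fun i => x i - 1

lemma comp3_inj {k : ℕ} {A B : SimpleGraph (Fin k → Fin 3)} (h : comp3 A = comp3 B) :
    A = B := by
  ext x y
  constructor
  · intro hxy
    exact (show (comp3 B).Adj (Sum.inr x) (Sum.inr y) from
      h ▸ (show (comp3 A).Adj (Sum.inr x) (Sum.inr y) from hxy))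
  · intro hxy
    exact (show (comp3 A).Adj (Sum.inr x) (Sum.inr y) from
      h.symm ▸ (show (comp3 B).Adj (Sum.inr x) (Sum.inr y) from hxy))

lemma kmin_ccond {k : ℕ} {H2 : SimpleGraph (Fin k → Fin 3)} (h : KMinimalC H2) :
    CCond H2 := by
  obtain ⟨⟨H2', hc, he⟩, -⟩ := h
  rw [comp3_inj he]
  exact hc

/-- generic bi-union/product membership -/
lemma mem_biUnion_prod {ι α : Type*} [Fintype ι] [DecidableEq ι] [DecidableEq α]
    (s : ι → Finset α) (p : ι × α) :
    p ∈ univ.biUnion (fun i => ({i} : Finset ι) ×ˢ s i) ↔ p.2 ∈ s p.1 := by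
  simp only [Finset.mem_biUnion, Finset.mem_product, Finset.mem_singleton, Finset.mem_univ,
    true_and]
  constructor
  · rintro ⟨a, ha, hb⟩; rw [ha]; exact hb
  · intro h; exact ⟨p.1, rfl, h⟩

lemma card_biUnion_prod {ι α : Type*} [Fintype ι] [DecidableEq ι] [DecidableEq α]
    (s : ι → Finset α) :
    (univ.biUnion fun i => ({i} : Finset ι) ×ˢ s i).card = ∑ i, (s i).card := by
  rw [Finset.card_biUnion]
  · exact Finset.sum_congr rfl fun i _ => by simp
  · intro i _ j _ hij
    refine Finset.disjoint_left.mpr ?_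
    rintro ⟨a, b⟩ hab hab'
    rw [Finset.mem_product] at hab hab'
    exact hij ((Finset.mem_singleton.mp hab.1) ▸ (Finset.mem_singleton.mp hab'.1))

/-! #### Cardinality computations -/

lemma card_ne0 {k : ℕ} :
    ((univ : Finset (Fin k → Fin 3)).filter fun x => ∀ i, x i ≠ 0).card = 2 ^ k := by
  have h : ((univ : Finset (Fin k → Fin 3)).filter fun x => ∀ i, x i ≠ 0).card
      = (univ : Finset (Fin k → Fin 2)).card := by
    apply Finset.card_nbij' (fun x => fun t => if x t = 1 then 0 else 1)
        (fun y => fun t => (y t).succ)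
    · intro x _; exact Finset.mem_univ _
    · intro y _
      simp only [Finset.mem_coe, Finset.mem_filter, Finset.mem_univ, true_and]
      intro i
      exact Fin.succ_ne_zero _
    · intro x hx
      simp only [Finset.mem_coe, Finset.mem_filter, Finset.mem_univ, true_and] at hx
      funext t
      rcases fin3_cases (x t) with h | h | h
      · exact absurd h (hx t)
      · simp only [h]; decide
      · simp only [h]; decide
    · intro y _
      funext t
      rcases fin2_cases (y t) with h | h <;> simp only [h] <;> decide
  rw [h]
  simp [Fintype.card_fun]

lemma card_ne1 {k : ℕ} :
    ((univ : Finset (Fin k → Fin 3)).filter fun x => ∀ i, x i ≠ 1).card = 2 ^ k := by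
  have h : ((univ : Finset (Fin k → Fin 3)).filter fun x => ∀ i, x i ≠ 1).card
      = (univ : Finset (Fin k → Fin 2)).card := by
    apply Finset.card_nbij' (fun x => fun t => if x t = 0 then 0 else 1)
        (fun y => fun t => if y t = 0 then 0 else 2)
    · intro x _; exact Finset.mem_univ _
    · intro y _
      simp only [Finset.mem_coe, Finset.mem_filter, Finset.mem_univ, true_and]
      intro i
      rcases fin2_cases (y i) with h | h <;> simp only [h] <;> decide
    · intro x hx
      simp only [Finset.mem_coe, Finset.mem_filter, Finset.mem_univ, true_and] at hx
      funext t
      rcases fin3_cases (x t) with h | h | h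
      · simp only [h]; decide
      · exact absurd h (hx t)
      · simp only [h]; decide
    · intro y _
      funext t
      rcases fin2_cases (y t) with h | h <;> simp only [h] <;> decide
  rw [h]
  simp [Fintype.card_fun]

lemma card_col1 {k : ℕ} (hk0 : 0 < k) (i : Fin k) :
    ((univ : Finset (Fin k → Fin 3)).filter fun x => x i = 1).card = 3 ^ (k - 1) := by
  have key : ((univ : Finset (Fin k → Fin 3)).filter fun x => x i = 1).card * 3 = 3 ^ k := by
    have h1 : (((univ : Finset (Fin k → Fin 3)).filter fun x => x i = 1) ×ˢ
        (univ : Finset (Fin 3))).card = (univ : Finset (Fin k → Fin 3)).card := by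
      apply Finset.card_nbij' (fun p => Function.update p.1 i p.2)
          (fun x => (Function.update x i 1, x i))
      · intro p _; exact Finset.mem_univ _
      · intro x _
        rw [Finset.mem_coe, Finset.mem_product, Finset.mem_filter]
        exact ⟨⟨Finset.mem_univ _, Function.update_self i 1 x⟩, Finset.mem_univ _⟩
      · intro p hp
        rw [Finset.mem_coe, Finset.mem_product, Finset.mem_filter] at hp
        obtain ⟨⟨-, hp1⟩, -⟩ := hp
        refine Prod.ext_iff.mpr ⟨?_, ?_⟩
        · show Function.update (Function.update p.1 i p.2) i 1 = p.1
          rw [Function.update_idem, ← hp1, Function.update_eq_self]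
        · exact Function.update_self i p.2 p.1
      · intro x _
        show Function.update (Function.update x i 1) i (x i) = x
        rw [Function.update_idem, Function.update_eq_self]
    rw [Finset.card_product] at h1
    simpa [Fintype.card_fun] using h1
  have h3 : (3 : ℕ) ^ k = 3 ^ (k - 1) * 3 := by
    rw [← pow_succ, Nat.sub_add_cancel hk0]
  rw [h3] at key
  exact Nat.eq_of_mul_eq_mul_right (by norm_num) key

lemma card_colD {k : ℕ} (hk0 : 0 < k) (i : Fin k) :
    ((univ : Finset (Fin k → Fin 3)).filter fun x => x i = 2 ∧ ∀ t, x t ≠ 0).card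
      = 2 ^ (k - 1) := by
  have key : ((univ : Finset (Fin k → Fin 3)).filter fun x => x i = 2 ∧ ∀ t, x t ≠ 0).card * 2
      = 2 ^ k := by
    have h1 : (((univ : Finset (Fin k → Fin 3)).filter fun x => x i = 2 ∧ ∀ t, x t ≠ 0) ×ˢ
        (univ : Finset (Fin 2))).card
        = ((univ : Finset (Fin k → Fin 3)).filter fun x => ∀ t, x t ≠ 0).card := by
      apply Finset.card_nbij' (fun p => Function.update p.1 i (p.2.succ))
          (fun x => (Function.update x i 2, if x i = 1 then 0 else 1))
      · intro p hp
        rw [Finset.mem_coe, Finset.mem_product, Finset.mem_filter] at hp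
        obtain ⟨⟨-, -, hp0⟩, -⟩ := hp
        simp only [Finset.mem_coe, Finset.mem_filter, Finset.mem_univ, true_and]
        intro t
        by_cases h : t = i
        · rw [h, Function.update_self]; exact Fin.succ_ne_zero _
        · rw [Function.update_of_ne h]; exact hp0 t
      · intro x hx
        rw [Finset.mem_coe, Finset.mem_filter] at hx
        rw [Finset.mem_coe, Finset.mem_product, Finset.mem_filter]
        refine ⟨⟨Finset.mem_univ _, Function.update_self i 2 x, ?_⟩, Finset.mem_univ _⟩
        intro t
        show Function.update x i 2 t ≠ 0
        by_cases h : t = i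
        · rw [h, Function.update_self]; decide
        · rw [Function.update_of_ne h]; exact hx.2 t
      · intro p hp
        rw [Finset.mem_coe, Finset.mem_product, Finset.mem_filter] at hp
        obtain ⟨⟨-, hp2, -⟩, -⟩ := hp
        refine Prod.ext_iff.mpr ⟨?_, ?_⟩
        · show Function.update (Function.update p.1 i p.2.succ) i 2 = p.1
          rw [Function.update_idem, ← hp2, Function.update_eq_self]
        · show (if (Function.update p.1 i p.2.succ) i = 1 then (0 : Fin 2) else 1) = p.2
          rw [Function.update_self]
          rcases fin2_cases p.2 with h | h <;> rw [h] <;> decide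
      · intro x hx
        rw [Finset.mem_coe, Finset.mem_filter] at hx
        show Function.update (Function.update x i 2) i
            ((if x i = 1 then (0 : Fin 2) else 1)).succ = x
        rw [Function.update_idem]
        have hsucc : ((if x i = 1 then (0 : Fin 2) else 1)).succ = x i := by
          rcases fin3_cases (x i) with h | h | h
          · exact absurd h (hx.2 i)
          · rw [h]; decide
          · rw [h]; decide
        rw [hsucc, Function.update_eq_self]
    rw [Finset.card_product, card_ne0] at h1
    simpa using h1
  have h3 : (2 : ℕ) ^ k = 2 ^ (k - 1) * 2 := by
    rw [← pow_succ, Nat.sub_add_cancel hk0]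
  rw [h3] at key
  exact Nat.eq_of_mul_eq_mul_right (by norm_num) key

/-! #### Degree lemmas from the covering conditions -/

variable {k : ℕ} {H2 : SimpleGraph (Fin k → Fin 3)} [DecidableRel H2.Adj]

lemma deg_pos_one (hcc : CCond H2) (i : Fin k) (x : Fin k → Fin 3) (hx : x i = 1) :
    0 < H2.degree x := by
  obtain ⟨y, hy, -⟩ := hcc.2.1 i x hx
  exact (H2.degree_pos_iff_exists_adj x).mpr ⟨y, hy⟩

lemma deg_pos_tf (hcc : CCond H2) (hk0 : 0 < k) (x : Fin k → Fin 3) (hx : ∀ i, x i ≠ 0) :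
    0 < H2.degree x := by
  by_cases h1 : ∃ i, x i = 1
  · obtain ⟨i, hi⟩ := h1
    exact deg_pos_one hcc i x hi
  · push_neg at h1
    have hx2 : x ⟨0, hk0⟩ = 2 := by
      rcases fin3_cases (x ⟨0, hk0⟩) with h | h | h
      · exact absurd h (hx _)
      · exact absurd h (h1 _)
      · exact h
    obtain ⟨y, hy, -⟩ := hcc.2.2 ⟨0, hk0⟩ x hx2 hx
    exact (H2.degree_pos_iff_exists_adj x).mpr ⟨y, hy⟩

lemma uniq_nb (hcc : CCond H2) (t : Fin k → Fin 3) (ht : ∀ i, t i ≠ 0)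
    (hd : H2.degree t = 1) :
    H2.Adj t (predf t) ∧ ∀ y, H2.Adj t y → y = predf t := by
  have hd' : (H2.neighborFinset t).card = 1 := hd
  obtain ⟨u, hu⟩ := Finset.card_eq_one.mp hd'
  have hmem : ∀ y, H2.Adj t y → y = u := by
    intro y hy
    have hmem' : y ∈ H2.neighborFinset t := (H2.mem_neighborFinset t y).mpr hy
    rw [hu] at hmem'
    exact Finset.mem_singleton.mp hmem'
  have hupred : u = predf t := by
    funext i
    rcases fin3_cases (t i) with h | h | h
    · exact absurd h (ht i)
    · obtain ⟨y, hy, hC⟩ := hcc.2.1 i t h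
      rcases hC.1 with ⟨ha, -⟩ | ⟨-, hb⟩
      · rw [h] at ha; exact absurd ha (by decide)
      · rw [← hmem y hy, hb]
        show (0 : Fin 3) = t i - 1
        rw [h]; decide
    · obtain ⟨y, hy, hD⟩ := hcc.2.2 i t h ht
      rcases hD.1 with ⟨ha, -⟩ | ⟨-, hb⟩
      · rw [h] at ha; exact absurd ha (by decide)
      · rw [← hmem y hy, hb]
        show (1 : Fin 3) = t i - 1
        rw [h]; decide
  have hadj : H2.Adj t u := by
    have hm : u ∈ H2.neighborFinset t := by rw [hu]; exact Finset.mem_singleton_self u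
    exact (H2.mem_neighborFinset t u).mp hm
  exact ⟨hupred ▸ hadj, fun y hy => (hmem y hy).trans hupred⟩

lemma deg2_pred (hcc : CCond H2) (t : Fin k → Fin 3) (ht : ∀ i, t i ≠ 0)
    (hd : H2.degree t = 1) (j : Fin k) (hj : t j = 2) : 1 < H2.degree (predf t) := by
  obtain ⟨hadj, -⟩ := uniq_nb hcc t ht hd
  have hpj : predf t j = 1 := by show t j - 1 = 1; rw [hj]; decide
  obtain ⟨w, hw, hC⟩ := hcc.2.1 j (predf t) hpj
  have hwj : w j = 0 := by
    rcases hC.1 with ⟨ha, -⟩ | ⟨-, hb⟩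
    · rw [hpj] at ha; exact absurd ha (by decide)
    · exact hb
  have hwt : t ≠ w := by
    intro hEq
    rw [← hEq, hj] at hwj
    exact absurd hwj (by decide)
  show 1 < (H2.neighborFinset (predf t)).card
  refine Finset.one_lt_card.mpr ⟨t, ?_, w, ?_, hwt⟩
  · exact (H2.mem_neighborFinset _ _).mpr hadj.symm
  · exact (H2.mem_neighborFinset _ _).mpr hw

lemma all0_deg (hcc : CCond H2) (hk0 : 0 < k) (h1 : H2.degree (allc k 1) ≤ 2)
    (h2 : H2.degree (allc k 2) = 1) : 0 < H2.degree (allc k 0) := by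
  have htf2 : ∀ i, allc k 2 i ≠ 0 := fun i => by show (2 : Fin 3) ≠ 0; decide
  obtain ⟨hadj2, -⟩ := uniq_nb hcc (allc k 2) htf2 h2
  have hpred2 : predf (allc k 2) = allc k 1 := by
    funext i; show (2 : Fin 3) - 1 = 1; decide
  rw [hpred2] at hadj2
  have hw : ∀ i : Fin k, ∃ w, H2.Adj (allc k 1) w ∧ w i = 0 := by
    intro i
    obtain ⟨y, hy, hC⟩ := hcc.2.1 i (allc k 1) rfl
    rcases hC.1 with ⟨ha, -⟩ | ⟨-, hb⟩
    · exact absurd ha (show allc k 1 i ≠ 0 from by show (1 : Fin 3) ≠ 0; decide)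
    · exact ⟨y, hy, hb⟩
  obtain ⟨w0, hw0a, hw00⟩ := hw ⟨0, hk0⟩
  have hne2 : ∀ w : Fin k → Fin 3, (∃ i, w i = 0) → allc k 2 ≠ w := by
    rintro w ⟨i, hi⟩ hEq
    have hfi := congrFun hEq i
    rw [hi] at hfi
    exact absurd hfi (show allc k 2 i ≠ 0 from by show (2 : Fin 3) ≠ 0; decide)
  have hweq : ∀ i : Fin k, ∀ w, H2.Adj (allc k 1) w → w i = 0 → w = w0 := by
    intro i w hwa hwi
    by_contra hne
    have hsub : ({allc k 2, w, w0} : Finset _) ⊆ H2.neighborFinset (allc k 1) := by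
      intro z hz
      simp only [Finset.mem_insert, Finset.mem_singleton] at hz
      rcases hz with rfl | rfl | rfl
      · exact (H2.mem_neighborFinset _ _).mpr hadj2.symm
      · exact (H2.mem_neighborFinset _ _).mpr hwa
      · exact (H2.mem_neighborFinset _ _).mpr hw0a
    have hcard : ({allc k 2, w, w0} : Finset _).card = 3 :=
      Finset.card_eq_three.mpr ⟨allc k 2, w, w0, hne2 w ⟨i, hwi⟩,
        hne2 w0 ⟨⟨0, hk0⟩, hw00⟩, hne, rfl⟩
    have hle := Finset.card_le_card hsub
    rw [hcard] at hle
    have hle2 : (H2.neighborFinset (allc k 1)).card ≤ 2 := h1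
    omega
  have hw0 : w0 = allc k 0 := by
    funext i
    obtain ⟨w, hwa, hwi⟩ := hw i
    rw [← hweq i w hwa hwi]
    exact hwi
  exact (H2.degree_pos_iff_exists_adj _).mpr ⟨allc k 1, (hw0 ▸ hw0a).symm⟩

/-! #### The lower-bound injection -/

/-- The sets used in the lower bound. -/
def TFset (k : ℕ) : Finset (Fin k → Fin 3) := univ.filter fun x => ∀ i, x i ≠ 0

def GoodFset (k : ℕ) : Finset (Fin k → Fin 3) :=
  insert (allc k 2) (univ.filter fun x => ∃ i, x i = 1)

def Pset (k : ℕ) (H2 : SimpleGraph (Fin k → Fin 3)) [DecidableRel H2.Adj] :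
    Finset ((Fin k → Fin 3) × ℕ) :=
  univ.biUnion fun v => ({v} : Finset (Fin k → Fin 3)) ×ˢ Finset.range (H2.degree v)

lemma mem_TFset {k : ℕ} (t : Fin k → Fin 3) : t ∈ TFset k ↔ ∀ i, t i ≠ 0 := by
  simp [TFset]

lemma mem_Pset {k : ℕ} {H2 : SimpleGraph (Fin k → Fin 3)} [DecidableRel H2.Adj]
    (p : (Fin k → Fin 3) × ℕ) : p ∈ Pset k H2 ↔ p.2 < H2.degree p.1 := by
  rw [Pset, mem_biUnion_prod]
  exact Finset.mem_range

lemma card_Pset {k : ℕ} {H2 : SimpleGraph (Fin k → Fin 3)} [DecidableRel H2.Adj] :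
    (Pset k H2).card = 2 * H2.edgeFinset.card := by
  rw [Pset, card_biUnion_prod]
  simp only [Finset.card_range]
  exact H2.sum_degrees_eq_twice_card_edges

/-- The injection used in the lower bound. -/
def lbF (k : ℕ) (H2 : SimpleGraph (Fin k → Fin 3)) [DecidableRel H2.Adj] :
    ((Fin k → Fin 3) ⊕ (Fin k → Fin 3)) → (Fin k → Fin 3) × ℕ
  | Sum.inl g => (g, 0)
  | Sum.inr t =>
      if 2 ≤ H2.degree t then (t, 1)
      else if t = allc k 1 then (allc k 0, 0)
      else if t = allc k 2 then
        (if 3 ≤ H2.degree (allc k 1) then (allc k 1, 2) else (allc k 0, 0))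
      else (predf t, 1)

lemma lbF_branch (hcc : CCond H2) (hk0 : 0 < k) (t : Fin k → Fin 3) (ht : ∀ i, t i ≠ 0) :
    (2 ≤ H2.degree t ∧ lbF k H2 (Sum.inr t) = (t, 1)) ∨
    ((H2.degree t = 1 ∧ t = allc k 1) ∧ lbF k H2 (Sum.inr t) = (allc k 0, 0)) ∨
    ((H2.degree t = 1 ∧ t = allc k 2 ∧ 3 ≤ H2.degree (allc k 1)) ∧
      lbF k H2 (Sum.inr t) = (allc k 1, 2)) ∨
    ((H2.degree t = 1 ∧ t = allc k 2 ∧ H2.degree (allc k 1) ≤ 2) ∧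
      lbF k H2 (Sum.inr t) = (allc k 0, 0)) ∨
    (((∃ i, t i = 1) ∧ (∃ j, t j = 2) ∧ H2.degree t = 1) ∧
      lbF k H2 (Sum.inr t) = (predf t, 1)) := by
  have hpos := deg_pos_tf hcc hk0 t ht
  simp only [lbF]
  split_ifs with h1 h2 h3 h4
  · exact Or.inl ⟨h1, rfl⟩
  · exact Or.inr (Or.inl ⟨⟨by omega, h2⟩, rfl⟩)
  · exact Or.inr (Or.inr (Or.inl ⟨⟨by omega, h3, h4⟩, rfl⟩))
  · exact Or.inr (Or.inr (Or.inr (Or.inl ⟨⟨by omega, h3, by omega⟩, rfl⟩)))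
  · refine Or.inr (Or.inr (Or.inr (Or.inr ⟨⟨?_, ?_, by omega⟩, rfl⟩)))
    · by_contra hno
      push_neg at hno
      exact h3 (funext fun i => by
        rcases fin3_cases (t i) with h | h | h
        exacts [absurd h (ht i), absurd h (hno i), h])
    · by_contra hno
      push_neg at hno
      exact h2 (funext fun i => by
        rcases fin3_cases (t i) with h | h | h
        exacts [absurd h (ht i), h, absurd h (hno i)])

lemma lower_bound (hk0 : 0 < k) (hcc : CCond H2) :
    3 ^ k + 1 ≤ 2 * H2.edgeFinset.card := by
  classical
  -- basic facts
  have hall0 : allc k 0 ∉ GoodFset k := by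
    simp only [GoodFset, Finset.mem_insert, Finset.mem_filter, Finset.mem_univ, true_and]
    rintro (h | ⟨i, hi⟩)
    · exact absurd (congrFun h ⟨0, hk0⟩) (show allc k 0 ⟨0, hk0⟩ ≠ allc k 2 ⟨0, hk0⟩ from
        by show (0 : Fin 3) ≠ 2; decide)
    · exact absurd hi (show allc k 0 i ≠ 1 from by show (0 : Fin 3) ≠ 1; decide)
  have hcontra : ¬(H2.degree (allc k 1) = 1 ∧ H2.degree (allc k 2) = 1) := by
    rintro ⟨hA, hB⟩
    obtain ⟨-, huniq⟩ := uniq_nb hcc (allc k 1)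
      (fun i => by show (1 : Fin 3) ≠ 0; decide) hA
    obtain ⟨hadj2, -⟩ := uniq_nb hcc (allc k 2)
      (fun i => by show (2 : Fin 3) ≠ 0; decide) hB
    have hp2 : predf (allc k 2) = allc k 1 := by
      funext i; show (2 : Fin 3) - 1 = 1; decide
    rw [hp2] at hadj2
    have h21 := huniq (allc k 2) hadj2.symm
    have hp1 : predf (allc k 1) = allc k 0 := by
      funext i; show (1 : Fin 3) - 1 = 0; decide
    rw [hp1] at h21
    exact absurd (congrFun h21 ⟨0, hk0⟩) (show allc k 2 ⟨0, hk0⟩ ≠ allc k 0 ⟨0, hk0⟩ from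
      by show (2 : Fin 3) ≠ 0; decide)
  -- maps-to
  have hmaps : ∀ a ∈ (GoodFset k).disjSum (TFset k), lbF k H2 a ∈ Pset k H2 := by
    rintro (g | t) ha
    · rw [Finset.inl_mem_disjSum] at ha
      rw [mem_Pset]
      show 0 < H2.degree g
      rcases Finset.mem_insert.mp ha with rfl | hg
      · exact deg_pos_tf hcc hk0 _ (fun i => by show (2 : Fin 3) ≠ 0; decide)
      · obtain ⟨i, hi⟩ := (Finset.mem_filter.mp hg).2
        exact deg_pos_one hcc i g hi
    · rw [Finset.inr_mem_disjSum, mem_TFset] at ha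
      rcases lbF_branch hcc hk0 t ha with ⟨hc, he⟩ | ⟨hc, he⟩ | ⟨hc, he⟩ | ⟨hc, he⟩ |
        ⟨hc, he⟩ <;> rw [he, mem_Pset]
      · show 1 < H2.degree t
        omega
      · show 0 < H2.degree (allc k 0)
        obtain ⟨hd1, rfl⟩ := hc
        obtain ⟨hadj, -⟩ := uniq_nb hcc _ ha hd1
        have hp1 : predf (allc k 1) = allc k 0 := by
          funext i; show (1 : Fin 3) - 1 = 0; decide
        rw [hp1] at hadj
        exact (H2.degree_pos_iff_exists_adj _).mpr ⟨_, hadj.symm⟩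
      · show 2 < H2.degree (allc k 1)
        omega
      · show 0 < H2.degree (allc k 0)
        obtain ⟨hd1, rfl, hle⟩ := hc
        exact all0_deg hcc hk0 hle hd1
      · show 1 < H2.degree (predf t)
        obtain ⟨-, ⟨j, hj⟩, hd1⟩ := hc
        exact deg2_pred hcc t ha hd1 j hj
  -- injectivity
  have hcross : ∀ g ∈ GoodFset k, ∀ t ∈ TFset k,
      lbF k H2 (Sum.inl g) ≠ lbF k H2 (Sum.inr t) := by
    intro g hg t ht hEq
    rw [mem_TFset] at ht
    rcases lbF_branch hcc hk0 t ht with ⟨-, he⟩ | ⟨-, he⟩ | ⟨-, he⟩ | ⟨-, he⟩ | ⟨-, he⟩ <;>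
      rw [he] at hEq
    · have h01 : (0 : ℕ) = 1 := congrArg Prod.snd hEq
      exact absurd h01 (by omega)
    · have hg0 : g = allc k 0 := congrArg Prod.fst hEq
      rw [hg0] at hg
      exact hall0 hg
    · have h01 : (0 : ℕ) = 2 := congrArg Prod.snd hEq
      exact absurd h01 (by omega)
    · have hg0 : g = allc k 0 := congrArg Prod.fst hEq
      rw [hg0] at hg
      exact hall0 hg
    · have h01 : (0 : ℕ) = 1 := congrArg Prod.snd hEq
      exact absurd h01 (by omega)
  have hinj : Set.InjOn (lbF k H2) ((GoodFset k).disjSum (TFset k)) := by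
    rintro (g | t) ha (g' | t') hb hEq
    · rw [Finset.mem_coe, Finset.inl_mem_disjSum] at ha hb
      have hgg : g = g' := congrArg Prod.fst hEq
      rw [hgg]
    · rw [Finset.mem_coe, Finset.inl_mem_disjSum] at ha
      rw [Finset.mem_coe, Finset.inr_mem_disjSum] at hb
      exact absurd hEq (hcross g ha t' hb)
    · rw [Finset.mem_coe, Finset.inr_mem_disjSum] at ha
      rw [Finset.mem_coe, Finset.inl_mem_disjSum] at hb
      exact absurd hEq.symm (hcross g' hb t ha)
    · rw [Finset.mem_coe, Finset.inr_mem_disjSum, mem_TFset] at ha hb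
      rcases lbF_branch hcc hk0 t ha with ⟨hc, he⟩ | ⟨hc, he⟩ | ⟨hc, he⟩ | ⟨hc, he⟩ |
        ⟨hc, he⟩ <;>
        rcases lbF_branch hcc hk0 t' hb with ⟨hc', he'⟩ | ⟨hc', he'⟩ | ⟨hc', he'⟩ |
          ⟨hc', he'⟩ | ⟨hc', he'⟩ <;>
        rw [he, he'] at hEq
      · exact congrArg Sum.inr (congrArg Prod.fst hEq)
      · exact absurd (congrArg Prod.snd hEq : (1 : ℕ) = 0) (by omega)
      · exact absurd (congrArg Prod.snd hEq : (1 : ℕ) = 2) (by omega)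
      · exact absurd (congrArg Prod.snd hEq : (1 : ℕ) = 0) (by omega)
      · obtain ⟨i, hi⟩ := hc'.1
        refine absurd (?_ : t i = 0) (ha i)
        have hft : t = predf t' := congrArg Prod.fst hEq
        rw [hft]
        show t' i - 1 = 0
        rw [hi]; decide
      · exact absurd (congrArg Prod.snd hEq : (0 : ℕ) = 1) (by omega)
      · exact congrArg Sum.inr (hc.2.trans hc'.2.symm)
      · exact absurd (congrArg Prod.snd hEq : (0 : ℕ) = 2) (by omega)
      · exact absurd ⟨by rw [← hc.2]; exact hc.1, by rw [← hc'.2.1]; exact hc'.1⟩ hcontra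
      · exact absurd (congrArg Prod.snd hEq : (0 : ℕ) = 1) (by omega)
      · exact absurd (congrArg Prod.snd hEq : (2 : ℕ) = 1) (by omega)
      · exact absurd (congrArg Prod.snd hEq : (2 : ℕ) = 0) (by omega)
      · exact congrArg Sum.inr (hc.2.1.trans hc'.2.1.symm)
      · exact absurd (congrArg Prod.snd hEq : (2 : ℕ) = 0) (by omega)
      · exact absurd (congrArg Prod.snd hEq : (2 : ℕ) = 1) (by omega)
      · exact absurd (congrArg Prod.snd hEq : (0 : ℕ) = 1) (by omega)
      · exact absurd ⟨by rw [← hc'.2]; exact hc'.1, by rw [← hc.2.1]; exact hc.1⟩ hcontra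
      · exact absurd (congrArg Prod.snd hEq : (0 : ℕ) = 2) (by omega)
      · exact congrArg Sum.inr (hc.2.1.trans hc'.2.1.symm)
      · exact absurd (congrArg Prod.snd hEq : (0 : ℕ) = 1) (by omega)
      · obtain ⟨i, hi⟩ := hc.1
        refine absurd (?_ : t' i = 0) (hb i)
        have hft : predf t = t' := congrArg Prod.fst hEq
        rw [← hft]
        show t i - 1 = 0
        rw [hi]; decide
      · exact absurd (congrArg Prod.snd hEq : (1 : ℕ) = 0) (by omega)
      · exact absurd (congrArg Prod.snd hEq : (1 : ℕ) = 2) (by omega)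
      · exact absurd (congrArg Prod.snd hEq : (1 : ℕ) = 0) (by omega)
      · exact congrArg Sum.inr (funext fun i =>
          sub_left_injective (congrFun (congrArg Prod.fst hEq) i))
  -- cardinalities
  have hGcard : (GoodFset k).card
      = ((univ : Finset (Fin k → Fin 3)).filter fun x => ∃ i, x i = 1).card + 1 := by
    rw [GoodFset, Finset.card_insert_of_notMem]
    simp only [Finset.mem_filter, Finset.mem_univ, true_and, not_exists]
    intro i
    show allc k 2 i ≠ 1
    show (2 : Fin 3) ≠ 1
    decide
  have hsplit : ((univ : Finset (Fin k → Fin 3)).filter fun x => ∃ i, x i = 1).card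
      + ((univ : Finset (Fin k → Fin 3)).filter fun x => ¬ ∃ i, x i = 1).card = 3 ^ k := by
    rw [Finset.card_filter_add_card_filter_not]
    simp [Fintype.card_fun]
  have hneg : ((univ : Finset (Fin k → Fin 3)).filter fun x => ¬ ∃ i, x i = 1)
      = ((univ : Finset (Fin k → Fin 3)).filter fun x => ∀ i, x i ≠ 1) := by
    apply Finset.filter_congr
    intro x _
    simp
  rw [hneg, card_ne1] at hsplit
  have hTcard : (TFset k).card = 2 ^ k := card_ne0
  have hDcard : ((GoodFset k).disjSum (TFset k)).card = 3 ^ k + 1 := by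
    rw [Finset.card_disjSum, hGcard, hTcard, ← hsplit]
    ring
  have hle := Finset.card_le_card_of_injOn (lbF k H2) hmaps hinj
  rw [hDcard, card_Pset] at hle
  exact hle

/-! #### The upper bound -/

/-- The witness property used in the upper bound. -/
def SpecW {k : ℕ} (H2 : SimpleGraph (Fin k → Fin 3)) (e : Sym2 (Fin k → Fin 3))
    (p : Fin k × ((Fin k → Fin 3) × Bool)) : Prop :=
  (p.2.2 = false ∧ p.2.1 p.1 = 1 ∧
    ∀ y, H2.Adj p.2.1 y → CAdj p.1 p.2.1 y → s(p.2.1, y) = e) ∨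
  (p.2.2 = true ∧ (p.2.1 p.1 = 2 ∧ ∀ t, p.2.1 t ≠ 0) ∧
    ∀ y, H2.Adj p.2.1 y → DAdj p.1 p.2.1 y → s(p.2.1, y) = e)

lemma exists_specW (hmin : KMinimalC H2) (hcc : CCond H2) :
    ∀ e ∈ H2.edgeFinset, ∃ p, SpecW H2 e p := by
  intro e
  induction e using Sym2.ind with
  | _ u v =>
    intro he
    rw [SimpleGraph.mem_edgeFinset, SimpleGraph.mem_edgeSet] at he
    set H2' := H2.deleteEdges {s(u, v)} with hH2'
    have hadj' : ∀ x y, H2'.Adj x y ↔ H2.Adj x y ∧ s(x, y) ≠ s(u, v) := by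
      intro x y
      rw [hH2', SimpleGraph.deleteEdges_adj]
      simp
    have hlt : H2' < H2 := by
      apply lt_of_le_of_ne (SimpleGraph.deleteEdges_le _)
      intro hE
      have hA : H2'.Adj u v := by rw [hH2', hE]; exact he
      rw [hadj' u v] at hA
      exact hA.2 rfl
    have hnc : ¬ CCond H2' := fun hc => hmin.2 H2' hlt ⟨H2', hc, rfl⟩
    have hA : ∀ x y, H2'.Adj x y → ∃ i, CAdj i x y ∨ DAdj i x y := by
      intro x y hxy
      exact hcc.1 x y ((hadj' x y).mp hxy).1
    by_cases hB : ∀ (i : Fin k) (x : Fin k → Fin 3), x i = 1 →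
        ∃ y, H2'.Adj x y ∧ CAdj i x y
    · have hC : ¬ ∀ (i : Fin k) (x : Fin k → Fin 3), x i = 2 → (∀ t, x t ≠ 0) →
          ∃ y, H2'.Adj x y ∧ DAdj i x y := fun hC => hnc ⟨hA, hB, hC⟩
      push_neg at hC
      obtain ⟨i, x, hx2, hx0, hy⟩ := hC
      refine ⟨(i, x, true), Or.inr ⟨rfl, ⟨hx2, hx0⟩, ?_⟩⟩
      intro y hady hD
      by_contra hne
      exact hy y ((hadj' x y).mpr ⟨hady, hne⟩) hD
    · push_neg at hB
      obtain ⟨i, x, hx1, hy⟩ := hB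
      refine ⟨(i, x, false), Or.inl ⟨rfl, hx1, ?_⟩⟩
      intro y hady hC
      by_contra hne
      exact hy y ((hadj' x y).mpr ⟨hady, hne⟩) hC

lemma upper_bound (hk0 : 0 < k) (hmin : KMinimalC H2) (hcc : CCond H2) :
    H2.edgeFinset.card ≤ k * (3 ^ (k - 1) + 2 ^ (k - 1)) := by
  classical
  have hne : Nonempty (Fin k × ((Fin k → Fin 3) × Bool)) := ⟨(⟨0, hk0⟩, (allc k 0, false))⟩
  have hPe := exists_specW hmin hcc
  choose! w hw using hPe
  set Tgt : Finset (Fin k × ((Fin k → Fin 3) × Bool)) :=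
    univ.biUnion (fun i => ({i} : Finset (Fin k)) ×ˢ
      ((((univ : Finset (Fin k → Fin 3)).filter fun x => x i = 1) ×ˢ
          ({false} : Finset Bool)) ∪
       (((univ : Finset (Fin k → Fin 3)).filter fun x => x i = 2 ∧ ∀ t, x t ≠ 0) ×ˢ
          ({true} : Finset Bool)))) with hTgt
  have hmaps : ∀ e ∈ H2.edgeFinset, w e ∈ Tgt := by
    intro e he
    have hs := hw e he
    rw [hTgt, mem_biUnion_prod]
    rcases hs with ⟨hb, hx, -⟩ | ⟨hb, hx, -⟩
    · apply Finset.mem_union_left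
      rw [Finset.mem_product]
      exact ⟨Finset.mem_filter.mpr ⟨Finset.mem_univ _, hx⟩, Finset.mem_singleton.mpr hb⟩
    · apply Finset.mem_union_right
      rw [Finset.mem_product]
      exact ⟨Finset.mem_filter.mpr ⟨Finset.mem_univ _, hx⟩, Finset.mem_singleton.mpr hb⟩
  have hinj : Set.InjOn w H2.edgeFinset := by
    intro e he e' he' hEq
    have hs := hw e (Finset.mem_coe.mp he)
    have hs' := hw e' (Finset.mem_coe.mp he')
    rw [hEq] at hs
    rcases hs with ⟨hb, hx, hu⟩ | ⟨hb, hx, hu⟩ <;>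
      rcases hs' with ⟨hb', hx', hu'⟩ | ⟨hb', hx', hu'⟩
    · obtain ⟨y, hy, hC⟩ := hcc.2.1 (w e').1 (w e').2.1 hx
      exact (hu y hy hC).symm.trans (hu' y hy hC)
    · exact absurd (hb.symm.trans hb') (by simp)
    · exact absurd (hb.symm.trans hb') (by simp)
    · obtain ⟨y, hy, hD⟩ := hcc.2.2 (w e').1 (w e').2.1 hx.1 hx.2
      exact (hu y hy hD).symm.trans (hu' y hy hD)
  have hcard : Tgt.card = k * (3 ^ (k - 1) + 2 ^ (k - 1)) := by
    rw [hTgt, card_biUnion_prod]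
    have hone : ∀ i : Fin k,
        (((univ : Finset (Fin k → Fin 3)).filter fun x => x i = 1) ×ˢ
            ({false} : Finset Bool) ∪
         (((univ : Finset (Fin k → Fin 3)).filter fun x => x i = 2 ∧ ∀ t, x t ≠ 0) ×ˢ
            ({true} : Finset Bool))).card = 3 ^ (k - 1) + 2 ^ (k - 1) := by
      intro i
      rw [Finset.card_union_of_disjoint]
      · rw [Finset.card_product, Finset.card_product, Finset.card_singleton,
          Finset.card_singleton, card_col1 hk0 i, card_colD hk0 i, mul_one, mul_one]
      · refine Finset.disjoint_left.mpr ?_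
        rintro ⟨x, b⟩ hmem hmem'
        rw [Finset.mem_product, Finset.mem_singleton] at hmem hmem'
        exact absurd (hmem.2.symm.trans hmem'.2) (by simp)
    rw [Finset.sum_congr rfl fun i _ => hone i, Finset.sum_const, Finset.card_univ,
      Fintype.card_fin, smul_eq_mul]
  calc H2.edgeFinset.card ≤ Tgt.card := Finset.card_le_card_of_injOn w hmaps hinj
    _ = k * (3 ^ (k - 1) + 2 ^ (k - 1)) := hcard

end AuxKMin

/-- **Theorem.** If `H2` is `k`-minimal (`k ≥ 2`), then
`(3^k + 1)/2 ≤ |E(H2)| ≤ k · (3^(k−1) + 2^(k−1))` (the lower bound stated equivalently as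
`3^k + 1 ≤ 2 · |E(H2)|`). -/
theorem kMinimal_size_bounds (k : ℕ) (hk : 2 ≤ k) (H2 : SimpleGraph (Fin k → Fin 3))
    [DecidableRel H2.Adj] (h : KMinimalC H2) :
    3 ^ k + 1 ≤ 2 * H2.edgeFinset.card ∧
    H2.edgeFinset.card ≤ k * (3 ^ (k - 1) + 2 ^ (k - 1)) := by
  have hcc := kmin_ccond h
  have hk0 : 0 < k := by omega
  exact ⟨lower_bound hk0 hcc, upper_bound hk0 h hcc⟩
end
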